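/- If the primal linear program (P_b) has a unique optimal solution which is a degenerate basic solution, then the dual program (D_b) has at least two distinct optimal solutions. -/

import Mathlib

open Matrix

section LPAux
open Matrix Finset


lemma dotProduct_self_pos {n : Type*} [Fintype n] {v : n → ℝ} (hv : v ≠ 0) :
    0 < v ⬝ᵥ v := by
  rcases lt_or_eq_of_le (Finset.sum_nonneg fun i _ => mul_self_nonneg (v i)) with h | h
  · exact h
  · exact absurd (dotProduct_self_eq_zero.mp h.symm) hv

/-- Farkas' lemma, homogeneous cone version. -/
lemma farkas {n : Type*} [Fintype n] :
    ∀ {N : ℕ} (a : Fin N → n → ℝ) (b : n → ℝ),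
      (∃ u : Fin N → ℝ, (∀ i, 0 ≤ u i) ∧ ∑ i, u i • a i = b) ∨
      (∃ y : n → ℝ, (∀ i, 0 ≤ a i ⬝ᵥ y) ∧ b ⬝ᵥ y < 0) := by
  intro N
  induction N with
  | zero =>
    intro a b
    by_cases hb : b = 0
    · exact Or.inl ⟨0, fun i => le_refl _, by simp [hb]⟩
    · refine Or.inr ⟨-b, fun i => (Fin.elim0 i), ?_⟩
      have := dotProduct_self_pos hb
      rw [dotProduct_neg]
      linarith
  | succ N ih =>
    intro a b
    rcases ih (fun i => a i.castSucc) b with ⟨u, hu, hsum⟩ | ⟨y, hy, hby⟩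
    · refine Or.inl ⟨Fin.snoc u 0, ?_, ?_⟩
      · intro i
        refine Fin.lastCases ?_ ?_ i <;> simp [hu]
      · rw [Fin.sum_univ_castSucc]
        simpa using hsum
    · by_cases hN : 0 ≤ a (Fin.last N) ⬝ᵥ y
      · refine Or.inr ⟨y, ?_, hby⟩
        intro i
        refine Fin.lastCases hN (fun i => hy i) i
      · push_neg at hN
        set α := a (Fin.last N) ⬝ᵥ y with hα
        rcases ih (fun i => a i.castSucc - (a i.castSucc ⬝ᵥ y / α) • a (Fin.last N))
            (b - (b ⬝ᵥ y / α) • a (Fin.last N)) with ⟨u, hu, hsum⟩ | ⟨z, hz, hbz⟩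
        · refine Or.inl ⟨Fin.snoc u (b ⬝ᵥ y / α - ∑ i, u i * (a i.castSucc ⬝ᵥ y / α)), ?_, ?_⟩
          · intro i
            refine Fin.lastCases ?_ (fun i => by simp [hu i]) i
            simp only [Fin.snoc_last]
            have h1 : 0 ≤ b ⬝ᵥ y / α := le_of_lt (div_pos_of_neg_of_neg hby hN)
            have h2 : ∑ i, u i * (a i.castSucc ⬝ᵥ y / α) ≤ 0 := by
              apply Finset.sum_nonpos
              intro i _
              exact mul_nonpos_of_nonneg_of_nonpos (hu i)
                (div_nonpos_of_nonneg_of_nonpos (hy i) hN.le)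
            linarith
          · rw [Fin.sum_univ_castSucc]
            simp only [Fin.snoc_castSucc, Fin.snoc_last]
            have := hsum
            rw [Finset.sum_congr rfl (fun i _ => smul_sub (u i) _ _)] at this
            rw [Finset.sum_sub_distrib] at this
            have h3 : ∑ i, u i • ((a i.castSucc ⬝ᵥ y / α) • a (Fin.last N))
                = (∑ i, u i * (a i.castSucc ⬝ᵥ y / α)) • a (Fin.last N) := by
              rw [Finset.sum_smul]
              exact Finset.sum_congr rfl fun i _ => (smul_smul _ _ _)
            rw [h3] at this
            have : ∑ i, u i • a i.castSucc = b - (b ⬝ᵥ y / α) • a (Fin.last N)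
                + (∑ i, u i * (a i.castSucc ⬝ᵥ y / α)) • a (Fin.last N) := by
              rw [← this]; abel
            rw [this, sub_smul]
            module
        · refine Or.inr ⟨z - (a (Fin.last N) ⬝ᵥ z / α) • y, ?_, ?_⟩
          · intro i
            refine Fin.lastCases ?_ ?_ i
            · rw [dotProduct_sub, dotProduct_smul, smul_eq_mul, ← hα]
              have : a (Fin.last N) ⬝ᵥ z / α * α = a (Fin.last N) ⬝ᵥ z :=
                div_mul_cancel₀ _ hN.ne
              linarith [this]
            · intro i
              have := hz i
              rw [sub_dotProduct, smul_dotProduct] at this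
              rw [dotProduct_sub, dotProduct_smul]
              simp only [smul_eq_mul] at this ⊢
              have heq : a i.castSucc ⬝ᵥ y / α * (a (Fin.last N) ⬝ᵥ z)
                  = a (Fin.last N) ⬝ᵥ z / α * (a i.castSucc ⬝ᵥ y) := by ring
              linarith [this, heq.ge, heq.le]
          · have := hbz
            rw [sub_dotProduct, smul_dotProduct] at this
            rw [dotProduct_sub, dotProduct_smul]
            simp only [smul_eq_mul] at this ⊢
            have heq : b ⬝ᵥ y / α * (a (Fin.last N) ⬝ᵥ z)
                = a (Fin.last N) ⬝ᵥ z / α * (b ⬝ᵥ y) := by ring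
            linarith [this, heq.ge, heq.le]


section
variable {n : Type*} [Fintype n]

lemma pack_dotProduct (v : n → ℝ) (s : ℝ) (y : n ⊕ Unit → ℝ) :
    (Sum.elim v (fun _ => s)) ⬝ᵥ y = v ⬝ᵥ (y ∘ Sum.inl) + s * y (Sum.inr ()) := by
  simp [dotProduct, Fintype.sum_sum_type]


/-- Farkas' lemma for systems of linear inequalities (Gale's theorem). -/
lemma gale {N : ℕ} (M : Fin N → n → ℝ) (q : Fin N → ℝ)
    (h : ¬ ∃ y : n → ℝ, ∀ i, M i ⬝ᵥ y ≤ q i) :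
    ∃ u : Fin N → ℝ, (∀ i, 0 ≤ u i) ∧ ∑ i, u i • M i = 0 ∧ ∑ i, u i * q i < 0 := by
  classical
  set pk : (n → ℝ) → ℝ → (n ⊕ Unit → ℝ) := fun v s => Sum.elim v (fun _ => s) with hpk
  set a : Fin (N + 1) → (n ⊕ Unit → ℝ) :=
    Fin.snoc (fun i => pk (M i) (q i)) (pk 0 1) with ha
  rcases farkas a (pk 0 (-1)) with ⟨u, hu, hsum⟩ | ⟨y, hy, hby⟩
  · refine ⟨fun i => u i.castSucc, fun i => hu _, ?_, ?_⟩
    · funext x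
      have := congrFun hsum (Sum.inl x)
      rw [Fin.sum_univ_castSucc] at this
      simp only [ha, Fin.snoc_castSucc, Fin.snoc_last, hpk] at this
      simpa using this
    · have := congrFun hsum (Sum.inr ())
      rw [Fin.sum_univ_castSucc] at this
      simp only [ha, Fin.snoc_castSucc, Fin.snoc_last, hpk, Pi.add_apply,
        Finset.sum_apply, Pi.smul_apply, Sum.elim_inr, smul_eq_mul, mul_one] at this
      have hlast := hu (Fin.last N)
      -- this : ∑ i, u i.castSucc * q i + u (Fin.last N) * 1 = -1
      nlinarith [this]
  · exfalso
    have hs : 0 < y (Sum.inr ()) := by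
      have h1 := hy (Fin.last N)
      have h2 := hby
      rw [ha, Fin.snoc_last, hpk] at h1
      rw [hpk] at h2
      rw [pack_dotProduct] at h1 h2
      simp at h1 h2
      cases lt_or_eq_of_le h1 with
      | inl h => exact h
      | inr h => exact absurd h2 (by rw [← h]; simp)
    apply h
    refine ⟨fun x => -(y (Sum.inl x)) / y (Sum.inr ()), fun i => ?_⟩
    have h1 := hy i.castSucc
    rw [ha, Fin.snoc_castSucc, hpk, pack_dotProduct] at h1
    -- h1 : 0 ≤ M i ⬝ᵥ (y ∘ Sum.inl) + q i * y (Sum.inr ())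
    have hdot : M i ⬝ᵥ (fun x => -(y (Sum.inl x)) / y (Sum.inr ()))
        = -(M i ⬝ᵥ (y ∘ Sum.inl)) / y (Sum.inr ()) := by
      simp [dotProduct, Finset.sum_div, neg_div]
      congr 1
      funext x
      ring
    rw [hdot]
    rw [div_le_iff₀ hs]
    nlinarith [h1]

end



/-- Weak duality computation. -/
lemma weak_dual {M D : ℕ} (A : Matrix (Fin M) (Fin D) ℝ) (x : Fin D → ℝ) (l : Fin M → ℝ) :
    (A *ᵥ x) ⬝ᵥ l = x ⬝ᵥ (Aᵀ *ᵥ l) := by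
  rw [dotProduct_comm, mulVec_transpose, dotProduct_mulVec, dotProduct_comm]

lemma weak_duality {M D : ℕ} (A : Matrix (Fin M) (Fin D) ℝ) (b : Fin M → ℝ) (c : Fin D → ℝ)
    (x : Fin D → ℝ) (hfeas : A *ᵥ x = b) (hpos : ∀ i, 0 ≤ x i)
    (l : Fin M → ℝ) (hl : ∀ j, (Aᵀ *ᵥ l) j ≤ c j) : b ⬝ᵥ l ≤ c ⬝ᵥ x := by
  rw [← hfeas, weak_dual, dotProduct_comm c x]
  exact Finset.sum_le_sum fun i _ => mul_le_mul_of_nonneg_left (hl i) (hpos i)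

/-- Strong LP duality for standard form programs with attained primal optimum. -/
lemma strong_duality {M D : ℕ} (A : Matrix (Fin M) (Fin D) ℝ) (b : Fin M → ℝ) (c : Fin D → ℝ)
    (x0 : Fin D → ℝ) (hfeas : A *ᵥ x0 = b) (hpos : ∀ i, 0 ≤ x0 i)
    (hopt : ∀ x, A *ᵥ x = b → (∀ i, 0 ≤ x i) → c ⬝ᵥ x0 ≤ c ⬝ᵥ x) :
    ∃ l : Fin M → ℝ, (∀ j, (Aᵀ *ᵥ l) j ≤ c j) ∧ b ⬝ᵥ l = c ⬝ᵥ x0 := by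
  classical
  set rows : Fin (D + 1) → Fin M → ℝ :=
    Fin.snoc (fun j k => A k j) (-b) with hrows
  set q : Fin (D + 1) → ℝ := Fin.snoc c (-(c ⬝ᵥ x0)) with hq
  by_cases hfe : ∃ y : Fin M → ℝ, ∀ i, rows i ⬝ᵥ y ≤ q i
  · obtain ⟨y, hy⟩ := hfe
    refine ⟨y, fun j => ?_, le_antisymm (weak_duality A b c x0 hfeas hpos y fun j => ?_) ?_⟩
    · have := hy j.castSucc
      simpa [hrows, hq, mulVec] using this
    · have := hy j.castSucc
      simpa [hrows, hq, mulVec] using this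
    · have := hy (Fin.last D)
      simp only [hrows, hq, Fin.snoc_last, neg_dotProduct] at this
      linarith
  · obtain ⟨u, hu, hsum, hqs⟩ := gale rows q hfe
    exfalso
    set x : Fin D → ℝ := fun i => u i.castSucc with hx
    set t : ℝ := u (Fin.last D) with ht
    have hAx : A *ᵥ x = t • b := by
      funext k
      have := congrFun hsum k
      rw [Fin.sum_univ_castSucc] at this
      simp only [hrows, Fin.snoc_castSucc, Fin.snoc_last, Finset.sum_apply, Pi.add_apply,
        Pi.smul_apply, Pi.neg_apply, smul_eq_mul, Pi.zero_apply] at this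
      simp only [mulVec, dotProduct, Pi.smul_apply, smul_eq_mul, hx]
      rw [Finset.sum_congr rfl (fun i _ => mul_comm (A k i) (u i.castSucc))]
      linarith
    have hcx : c ⬝ᵥ x < t * (c ⬝ᵥ x0) := by
      rw [Fin.sum_univ_castSucc] at hqs
      simp only [hq, Fin.snoc_castSucc, Fin.snoc_last] at hqs
      have : c ⬝ᵥ x = ∑ i : Fin D, u i.castSucc * c i := by
        rw [dotProduct_comm]; rfl
      rw [this]
      linarith
    rcases eq_or_lt_of_le (hu (Fin.last D)) with h0 | hpos'
    · have h0' : t = 0 := by rw [ht, ← h0]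
      have hx' : A *ᵥ (x0 + x) = b := by
        rw [mulVec_add, hfeas, hAx, h0', zero_smul, add_zero]
      have := hopt (x0 + x) hx' (fun i => add_nonneg (hpos i) (hu _))
      rw [dotProduct_add] at this
      rw [h0', zero_mul] at hcx
      linarith
    · have hx' : A *ᵥ (t⁻¹ • x) = b := by
        rw [mulVec_smul, hAx, smul_smul, inv_mul_cancel₀ (ne_of_gt hpos'), one_smul]
      have := hopt (t⁻¹ • x) hx' (fun i => mul_nonneg (inv_nonneg.mpr hpos'.le) (hu _))
      rw [dotProduct_smul, smul_eq_mul] at this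
      have h2 : c ⬝ᵥ x0 * t < t * (c ⬝ᵥ x0) + 0 := by
        calc c ⬝ᵥ x0 * t = t * (c ⬝ᵥ x0) := mul_comm _ _
          _ ≤ t * (t⁻¹ * (c ⬝ᵥ x))  := by
              rw [← mul_le_mul_iff_right₀ hpos'] at this; exact this
          _ = c ⬝ᵥ x := by rw [← mul_assoc, mul_inv_cancel₀ (show t ≠ 0 from ne_of_gt hpos'), one_mul]
          _ < t * (c ⬝ᵥ x0) + 0 := by linarith
      linarith [mul_comm (c ⬝ᵥ x0) t]



lemma snoc_dotProduct {D : ℕ} (v : Fin D → ℝ) (s : ℝ) (w : Fin (D+1) → ℝ) :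
    (Fin.snoc v s : Fin (D+1) → ℝ) ⬝ᵥ w = v ⬝ᵥ (w ∘ Fin.castSucc) + s * w (Fin.last D) := by
  rw [dotProduct, Fin.sum_univ_castSucc]
  simp [dotProduct]

lemma exists_slack {M D : ℕ} (A : Matrix (Fin M) (Fin D) ℝ) (b : Fin M → ℝ) (c : Fin D → ℝ)
    (x0 : Fin D → ℝ) (hfeas : A *ᵥ x0 = b) (hpos : ∀ i, 0 ≤ x0 i)
    (hopt : ∀ x, A *ᵥ x = b → (∀ i, 0 ≤ x i) → c ⬝ᵥ x0 ≤ c ⬝ᵥ x)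
    (huniq : ∀ x, A *ᵥ x = b → (∀ i, 0 ≤ x i) → c ⬝ᵥ x = c ⬝ᵥ x0 → x = x0)
    (l0 : Fin M → ℝ) (hl0 : ∀ i, (Aᵀ *ᵥ l0) i ≤ c i) (hl0v : b ⬝ᵥ l0 = c ⬝ᵥ x0)
    (j : Fin D) (hj : x0 j = 0) :
    ∃ mu : Fin M → ℝ, (∀ i, (Aᵀ *ᵥ mu) i ≤ c i) ∧ b ⬝ᵥ mu = c ⬝ᵥ x0 ∧
      (Aᵀ *ᵥ mu) j < c j := by
  classical
  set vstar := c ⬝ᵥ x0 with hv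
  set At : Matrix (Fin (M+1)) (Fin (D+1)) ℝ :=
    Matrix.of (Fin.snoc (fun k => (Fin.snoc (A k) 0 : Fin (D+1) → ℝ))
      (Fin.snoc c 1)) with hAt
  set bt : Fin (M+1) → ℝ := Fin.snoc b vstar with hbt
  set ct : Fin (D+1) → ℝ := fun i => if i = j.castSucc then (-1:ℝ) else 0 with hct
  set xt : Fin (D+1) → ℝ := Fin.snoc x0 0 with hxt
  have hctdot : ∀ w : Fin (D+1) → ℝ, ct ⬝ᵥ w = -(w j.castSucc) := by
    intro w
    simp only [hct, dotProduct, ite_mul, neg_mul, one_mul, zero_mul]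
    rw [Finset.sum_ite_eq' Finset.univ j.castSucc (fun i => -(w i))]
    simp
  -- feasibility of xt
  have hAtrow : ∀ (k : Fin M) (w : Fin (D+1) → ℝ),
      (At *ᵥ w) k.castSucc = A k ⬝ᵥ (w ∘ Fin.castSucc) + 0 * w (Fin.last D) := by
    intro k w
    show At k.castSucc ⬝ᵥ w = _
    have : At k.castSucc = (Fin.snoc (A k) 0 : Fin (D+1) → ℝ) := by
      funext i; simp [hAt]
    rw [this, snoc_dotProduct]
  have hAtlast : ∀ (w : Fin (D+1) → ℝ),
      (At *ᵥ w) (Fin.last M) = c ⬝ᵥ (w ∘ Fin.castSucc) + 1 * w (Fin.last D) := by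
    intro w
    show At (Fin.last M) ⬝ᵥ w = _
    have : At (Fin.last M) = (Fin.snoc c 1 : Fin (D+1) → ℝ) := by
      funext i; simp [hAt]
    rw [this, snoc_dotProduct]
  have hxtc : xt ∘ Fin.castSucc = x0 := by
    funext i; simp [hxt]
  have hxtfeas : At *ᵥ xt = bt := by
    funext k
    refine Fin.lastCases ?_ ?_ k
    · rw [hAtlast, hxtc]
      simp [hxt, hbt, hv]
    · intro k
      rw [hAtrow, hxtc]
      simp [hxt, hbt, ← hfeas]
      rfl
  have hxtpos : ∀ i, 0 ≤ xt i := by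
    intro i
    refine Fin.lastCases ?_ ?_ i <;> simp [hxt]
    exact hpos
  have hxtopt : ∀ x, At *ᵥ x = bt → (∀ i, 0 ≤ x i) → ct ⬝ᵥ xt ≤ ct ⬝ᵥ x := by
    intro w hw hwpos
    have h1 : A *ᵥ (w ∘ Fin.castSucc) = b := by
      funext k
      have := congrFun hw k.castSucc
      rw [hAtrow] at this
      simpa [hbt, mulVec] using this
    have h2 : c ⬝ᵥ (w ∘ Fin.castSucc) + w (Fin.last D) = vstar := by
      have := congrFun hw (Fin.last M)
      rw [hAtlast] at this
      simpa [hbt] using this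
    have h3 : vstar ≤ c ⬝ᵥ (w ∘ Fin.castSucc) :=
      hopt _ h1 (fun i => hwpos _)
    have h4 : c ⬝ᵥ (w ∘ Fin.castSucc) = vstar := by
      have := hwpos (Fin.last D); linarith
    have h5 : w ∘ Fin.castSucc = x0 := huniq _ h1 (fun i => hwpos _) (by rw [h4, hv])
    rw [hctdot, hctdot]
    have : w j.castSucc = x0 j := congrFun h5 j
    rw [this]
    have : xt j.castSucc = x0 j := congrFun hxtc j
    rw [this, hj]
  obtain ⟨nu, hnu, hnuv⟩ := strong_duality At bt ct xt hxtfeas hxtpos hxtopt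
  set lam : Fin M → ℝ := nu ∘ Fin.castSucc with hlam
  set t : ℝ := nu (Fin.last M) with htdef
  -- unpack dual constraints
  have hAtT : ∀ i : Fin D, (Atᵀ *ᵥ nu) i.castSucc = (Aᵀ *ᵥ lam) i + t * c i := by
    intro i
    show Atᵀ i.castSucc ⬝ᵥ nu = _
    have : Atᵀ i.castSucc = fun k => At k i.castSucc := rfl
    rw [this]
    show ∑ k, At k i.castSucc * nu k = _
    rw [Fin.sum_univ_castSucc]
    have e1 : ∀ k : Fin M, At k.castSucc i.castSucc = A k i := by
      intro k; simp [hAt]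
    have e2 : At (Fin.last M) i.castSucc = c i := by simp [hAt]
    simp only [e1, e2]
    have hALam : (Aᵀ *ᵥ lam) i = ∑ k : Fin M, A k i * nu k.castSucc := by
      simp [mulVec, dotProduct, hlam, transpose_apply]
    rw [hALam, htdef]
    ring
  have hrow : ∀ i : Fin D, (Aᵀ *ᵥ lam) i + t * c i ≤ (if i = j then (-1:ℝ) else 0) := by
    intro i
    have := hnu i.castSucc
    rw [hAtT] at this
    have hcast : ct i.castSucc = (if i = j then (-1:ℝ) else 0) := by
      simp only [hct]
      by_cases h : i = j
      · simp [h]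
      · have : ¬ (i.castSucc = j.castSucc) := fun hc => h (Fin.castSucc_injective _ hc)
        simp [h, this]
    rwa [hcast] at this
  have htle : t ≤ 0 := by
    have := hnu (Fin.last D)
    have hlast : (Atᵀ *ᵥ nu) (Fin.last D) = t := by
      show Atᵀ (Fin.last D) ⬝ᵥ nu = t
      have : Atᵀ (Fin.last D) = fun k => At k (Fin.last D) := rfl
      rw [this]
      show ∑ k, At k (Fin.last D) * nu k = t
      rw [Fin.sum_univ_castSucc]
      have e1 : ∀ k : Fin M, At k.castSucc (Fin.last D) = 0 := by
        intro k; simp [hAt]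
      have e2 : At (Fin.last M) (Fin.last D) = 1 := by simp [hAt]
      simp [e1, e2, htdef]
    have hctlast : ct (Fin.last D) = 0 := by
      simp only [hct]
      have hne : ¬ (Fin.last D = j.castSucc) := by
        intro h
        exact absurd (h ▸ rfl) (Fin.castSucc_lt_last j).ne'
      simp [hne]
    rw [hlast, hctlast] at this
    exact this
  have hbv : b ⬝ᵥ lam + t * vstar = 0 := by
    have h1 : bt ⬝ᵥ nu = b ⬝ᵥ lam + t * vstar := by
      rw [hbt, snoc_dotProduct]
      show b ⬝ᵥ lam + vstar * t = _
      ring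
    have h2 : ct ⬝ᵥ xt = 0 := by
      rw [hctdot]
      have : xt j.castSucc = x0 j := congrFun hxtc j
      rw [this, hj, neg_zero]
    rw [h1, h2] at hnuv
    exact hnuv
  rcases eq_or_lt_of_le htle with ht0 | htneg
  · -- t = 0 case
    refine ⟨l0 + lam, ?_, ?_, ?_⟩
    · intro i
      have h1 := hrow i
      rw [ht0, zero_mul, add_zero] at h1
      rw [mulVec_add, Pi.add_apply]
      have := hl0 i
      by_cases h : i = j
      · subst h
        rw [if_pos rfl] at h1
        linarith
      · rw [if_neg h] at h1
        linarith
    · rw [dotProduct_add, hl0v]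
      rw [ht0, zero_mul, add_zero] at hbv
      rw [hbv, add_zero, hv]
    · have h1 := hrow j
      rw [ht0, zero_mul, add_zero, if_pos rfl] at h1
      rw [mulVec_add, Pi.add_apply]
      linarith [hl0 j]
  · -- t < 0 case
    refine ⟨(-t)⁻¹ • lam, ?_, ?_, ?_⟩
    · intro i
      rw [mulVec_smul, Pi.smul_apply, smul_eq_mul]
      have h1 := hrow i
      have hpos' : 0 < -t := by linarith
      rw [inv_mul_le_iff₀ hpos']
      by_cases h : i = j
      · subst h
        rw [if_pos rfl] at h1
        nlinarith
      · rw [if_neg h] at h1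
        nlinarith
    · rw [dotProduct_smul, smul_eq_mul]
      have hpos' : 0 < -t := by linarith
      have hbl : b ⬝ᵥ lam = -t * vstar := by linarith
      rw [hbl, inv_mul_cancel_left₀ (ne_of_gt hpos')]
    · rw [mulVec_smul, Pi.smul_apply, smul_eq_mul]
      have h1 := hrow j
      rw [if_pos rfl] at h1
      have hpos' : 0 < -t := by linarith
      rw [inv_mul_lt_iff₀ hpos']
      nlinarith

end LPAux

noncomputable section

variable {m d : ℕ}

/-- The primal feasible set `P(b) = {x : A x = b, x ≥ 0}`. -/
def feasSet (A : Matrix (Fin m) (Fin d) ℝ) (b : Fin m → ℝ) : Set (Fin d → ℝ) :=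
  {x | A *ᵥ x = b ∧ ∀ i, 0 ≤ x i}

/-- The optimality set `OPT(b)` of the primal program `(P_b)`. -/
def optSet (A : Matrix (Fin m) (Fin d) ℝ) (b : Fin m → ℝ) (c : Fin d → ℝ) :
    Set (Fin d → ℝ) :=
  {x | x ∈ feasSet A b ∧ ∀ y ∈ feasSet A b, c ⬝ᵥ x ≤ c ⬝ᵥ y}

/-- The dual feasible set `{λ : Aᵀ λ ≤ c}`. -/
def dualFeasSet (A : Matrix (Fin m) (Fin d) ℝ) (c : Fin d → ℝ) : Set (Fin m → ℝ) :=
  {l | ∀ j, (Aᵀ *ᵥ l) j ≤ c j}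

/-- The set of optimal solutions of the dual program `(D_b)`. -/
def dualOptSet (A : Matrix (Fin m) (Fin d) ℝ) (b : Fin m → ℝ) (c : Fin d → ℝ) :
    Set (Fin m → ℝ) :=
  {l | l ∈ dualFeasSet A c ∧ ∀ mu ∈ dualFeasSet A c, b ⬝ᵥ mu ≤ b ⬝ᵥ l}

/-- The submatrix `A_I` of the columns indexed by `I`, where the subset
`I ⊆ {1,…,d}` of cardinality `m` is encoded by the strictly monotone
enumeration `e : Fin m → Fin d` of its elements. -/
def subMat (A : Matrix (Fin m) (Fin d) ℝ) (e : Fin m → Fin d) :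
    Matrix (Fin m) (Fin m) ℝ :=
  A.submatrix id e

/-- `e` encodes a basis: a subset of size `m` of the columns (strictly monotone
enumeration) whose corresponding submatrix `A_I` is invertible. -/
def IsBasis (A : Matrix (Fin m) (Fin d) ℝ) (e : Fin m → Fin d) : Prop :=
  StrictMono e ∧ IsUnit (subMat A e).det

/-- The primal basic solution `x(I, v)`: equal to `(A_I)⁻¹ v` on the coordinates
in `I` and `0` elsewhere. -/
def basicSol (A : Matrix (Fin m) (Fin d) ℝ) (e : Fin m → Fin d) (v : Fin m → ℝ) :
    Fin d → ℝ :=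
  fun i => ∑ j, if e j = i then ((subMat A e)⁻¹ *ᵥ v) j else 0

/-- The dual basic solution `λ(I) = (A_I)⁻ᵀ c_I`. -/
def dualSol (A : Matrix (Fin m) (Fin d) ℝ) (c : Fin d → ℝ) (e : Fin m → Fin d) :
    Fin m → ℝ :=
  ((subMat A e)ᵀ)⁻¹ *ᵥ fun j => c (e j)

/-- `I` is a dual feasible basis: `Aᵀ λ(I) ≤ c`. -/
def DualFeasibleBasis (A : Matrix (Fin m) (Fin d) ℝ) (c : Fin d → ℝ)
    (e : Fin m → Fin d) : Prop :=
  IsBasis A e ∧ ∀ j, (Aᵀ *ᵥ dualSol A c e) j ≤ c j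

/-- `I` is a primal feasible basis for `(P_b)`: `x(I,b) ≥ 0`. -/
def PrimalFeasibleBasis (A : Matrix (Fin m) (Fin d) ℝ) (b : Fin m → ℝ)
    (e : Fin m → Fin d) : Prop :=
  IsBasis A e ∧ ∀ i, 0 ≤ basicSol A e b i

/-- Proposition 2.5 (iii): if `(P_b)` has a unique optimal solution which is a
degenerate basic solution (fewer than `m` nonzero coordinates), then the dual
`(D_b)` has at least two distinct optimal solutions. -/
theorem stmt3 (hm : 1 ≤ m) (hmd : m ≤ d)
    (A : Matrix (Fin m) (Fin d) ℝ) (hA : A.rank = m)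
    (b : Fin m → ℝ) (c : Fin d → ℝ)
    (hopt : ∃ e : Fin m → Fin d, IsBasis A e ∧
      optSet A b c = {basicSol A e b} ∧
      {i | basicSol A e b i ≠ 0}.ncard < m) :
    ∃ l1 l2 : Fin m → ℝ, l1 ∈ dualOptSet A b c ∧ l2 ∈ dualOptSet A b c ∧
      l1 ≠ l2 := by
  classical
  obtain ⟨e, hbasis, hset, hcard⟩ := hopt
  set x0 : Fin d → ℝ := basicSol A e b with hx0def
  have hx0 : x0 ∈ optSet A b c := by rw [hset]; rfl
  obtain ⟨⟨hfeas, hpos⟩, hopt'⟩ := hx0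
  have hoptraw : ∀ x, A *ᵥ x = b → (∀ i, 0 ≤ x i) → c ⬝ᵥ x0 ≤ c ⬝ᵥ x :=
    fun x h1 h2 => hopt' x ⟨h1, h2⟩
  have huniq : ∀ x, A *ᵥ x = b → (∀ i, 0 ≤ x i) → c ⬝ᵥ x = c ⬝ᵥ x0 → x = x0 := by
    intro x h1 h2 h3
    have hx : x ∈ optSet A b c := by
      refine ⟨⟨h1, h2⟩, fun y hy => ?_⟩
      rw [h3]
      exact hopt' y hy
    rw [hset] at hx
    exact hx
  obtain ⟨l0, hl0, hl0v⟩ := strong_duality A b c x0 hfeas hpos hoptraw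
  set vstar := c ⬝ᵥ x0 with hv
  -- the set of zero coordinates
  set J : Finset (Fin d) := Finset.univ.filter (fun j => x0 j = 0) with hJ
  have hJne : J.Nonempty := by
    by_contra hne
    rw [Finset.not_nonempty_iff_eq_empty] at hne
    have hall : ∀ j, x0 j ≠ 0 := by
      intro j hj
      have : j ∈ J := by simp [hJ, hj]
      rw [hne] at this
      exact absurd this (Finset.notMem_empty j)
    have : {i | x0 i ≠ 0} = Set.univ := Set.eq_univ_of_forall hall
    rw [hx0def] at hcard
    rw [show {i | basicSol A e b i ≠ 0} = {i | x0 i ≠ 0} from rfl, this,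
      Set.ncard_univ] at hcard
    simp [Nat.card_eq_fintype_card] at hcard
    omega
  -- dual optimal solutions with slack at each zero coordinate
  have key : ∀ j : Fin d, x0 j = 0 → ∃ mu : Fin m → ℝ,
      (∀ i, (Aᵀ *ᵥ mu) i ≤ c i) ∧ b ⬝ᵥ mu = vstar ∧ (Aᵀ *ᵥ mu) j < c j :=
    fun j hj => exists_slack A b c x0 hfeas hpos hoptraw huniq l0 hl0 hl0v j hj
  set g : Fin d → (Fin m → ℝ) := fun j =>
    if h : x0 j = 0 then (key j h).choose else l0 with hg
  have hgfeas : ∀ j i, (Aᵀ *ᵥ g j) i ≤ c i := by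
    intro j i
    simp only [hg]
    split
    · exact (key j ‹_›).choose_spec.1 i
    · exact hl0 i
  have hgval : ∀ j, b ⬝ᵥ g j = vstar := by
    intro j
    simp only [hg]
    split
    · exact (key j ‹_›).choose_spec.2.1
    · exact hl0v
  have hgstrict : ∀ j, x0 j = 0 → (Aᵀ *ᵥ g j) j < c j := by
    intro j hj
    simp only [hg, dif_pos hj]
    exact (key j hj).choose_spec.2.2
  set N : ℕ := J.card with hN
  have hNpos : (0:ℝ) < N := by
    have := Finset.card_pos.mpr hJne
    exact_mod_cast this
  set lbar : Fin m → ℝ := (N : ℝ)⁻¹ • ∑ j ∈ J, g j with hlbar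
  have hmv : ∀ i, (Aᵀ *ᵥ lbar) i = (N:ℝ)⁻¹ * ∑ j ∈ J, (Aᵀ *ᵥ g j) i := by
    intro i
    rw [hlbar, mulVec_smul]
    have : Aᵀ *ᵥ (∑ j ∈ J, g j) = ∑ j ∈ J, Aᵀ *ᵥ g j :=
      map_sum (Matrix.mulVecLin Aᵀ) g J
    rw [this]
    simp
  have hlbarfeas : ∀ i, (Aᵀ *ᵥ lbar) i ≤ c i := by
    intro i
    rw [hmv]
    have h1 : ∑ j ∈ J, (Aᵀ *ᵥ g j) i ≤ ∑ _j ∈ J, c i :=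
      Finset.sum_le_sum fun j _ => hgfeas j i
    rw [Finset.sum_const, nsmul_eq_mul] at h1
    rw [inv_mul_le_iff₀ hNpos]
    exact h1
  have hlbarstrict : ∀ i ∈ J, (Aᵀ *ᵥ lbar) i < c i := by
    intro i hi
    rw [hmv]
    have hi0 : x0 i = 0 := by simpa [hJ] using hi
    have h1 : ∑ j ∈ J, (Aᵀ *ᵥ g j) i < ∑ _j ∈ J, c i := by
      refine Finset.sum_lt_sum (fun j _ => hgfeas j i) ⟨i, hi, hgstrict i hi0⟩
    rw [Finset.sum_const, nsmul_eq_mul] at h1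
    rw [inv_mul_lt_iff₀ hNpos]
    exact h1
  clear_value g
  have hlbarval : b ⬝ᵥ lbar = vstar := by
    rw [hlbar, dotProduct_smul]
    have : b ⬝ᵥ (∑ j ∈ J, g j) = ∑ j ∈ J, b ⬝ᵥ g j := by
      simp only [dotProduct, Finset.sum_apply]
      rw [Finset.sum_comm]
      exact Finset.sum_congr rfl fun i _ => by rw [Finset.mul_sum]
    rw [this, Finset.sum_congr rfl fun j _ => hgval j, Finset.sum_const, nsmul_eq_mul,
      smul_eq_mul, inv_mul_cancel_left₀ (ne_of_gt hNpos)]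
  clear_value lbar
  -- a nonzero direction in the kernel of the support columns
  set T : Finset (Fin d) := Finset.univ.filter (fun i => x0 i ≠ 0) with hT
  have hTcard : T.card < m := by
    have h1 : {i | x0 i ≠ 0}.ncard = T.card := by
      rw [Set.ncard_eq_toFinset_card']
      congr 1
      ext i
      simp [hT]
    rw [hx0def] at hcard
    rw [show {i | basicSol A e b i ≠ 0} = {i | x0 i ≠ 0} from rfl, h1] at hcard
    exact hcard
  obtain ⟨mu, hmune, hmuker⟩ : ∃ mu : Fin m → ℝ, mu ≠ 0 ∧
      ∀ i, x0 i ≠ 0 → (Aᵀ *ᵥ mu) i = 0 := by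
    set φ : (Fin m → ℝ) →ₗ[ℝ] ({i // i ∈ T} → ℝ) :=
      (LinearMap.funLeft ℝ ℝ (fun i : {i // i ∈ T} => (i : Fin d))).comp
        (Matrix.mulVecLin Aᵀ) with hφ
    have hninj : ¬ Function.Injective φ := by
      intro hinj
      have := LinearMap.finrank_le_finrank_of_injective hinj
      rw [Module.finrank_fin_fun, Module.finrank_pi] at this
      rw [Fintype.card_coe] at this
      omega
    rw [Function.not_injective_iff] at hninj
    obtain ⟨x, y, hxy, hne⟩ := hninj
    refine ⟨x - y, sub_ne_zero.mpr hne, ?_⟩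
    intro i hi
    have hiT : i ∈ T := by simp [hT, hi]
    have h5 := congrFun (show φ (x - y) = 0 by rw [map_sub, hxy, sub_self]) ⟨i, hiT⟩
    exact h5
  -- choose epsilon
  set f : Fin d → ℝ := fun j => (c j - (Aᵀ *ᵥ lbar) j) / (|(Aᵀ *ᵥ mu) j| + 1) with hf
  set ε : ℝ := J.inf' hJne f with hε
  have hεpos : 0 < ε := by
    rw [hε, Finset.lt_inf'_iff]
    intro j hj
    apply div_pos
    · linarith [hlbarstrict j hj]
    · positivity
  have hεbound : ∀ j ∈ J, ε * (|(Aᵀ *ᵥ mu) j| + 1) ≤ c j - (Aᵀ *ᵥ lbar) j := by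
    intro j hj
    have h1 : ε ≤ f j := Finset.inf'_le f hj
    have h2 : (0:ℝ) < |(Aᵀ *ᵥ mu) j| + 1 := by positivity
    rw [hf] at h1
    calc ε * (|(Aᵀ *ᵥ mu) j| + 1)
        ≤ (c j - (Aᵀ *ᵥ lbar) j) / (|(Aᵀ *ᵥ mu) j| + 1) * (|(Aᵀ *ᵥ mu) j| + 1) := by
          exact mul_le_mul_of_nonneg_right h1 h2.le
      _ = c j - (Aᵀ *ᵥ lbar) j := div_mul_cancel₀ _ h2.ne'
  clear_value ε
  have hbmu : b ⬝ᵥ mu = 0 := by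
    rw [← hfeas, weak_dual]
    apply Finset.sum_eq_zero
    intro i _
    by_cases h : x0 i = 0
    · rw [h, zero_mul]
    · rw [hmuker i h, mul_zero]
  -- the two dual optimal solutions
  have hfeas2 : ∀ (s : ℝ), |s| ≤ ε → ∀ i, (Aᵀ *ᵥ (lbar + s • mu)) i ≤ c i := by
    intro s hs i
    rw [mulVec_add, Pi.add_apply, mulVec_smul, Pi.smul_apply, smul_eq_mul]
    by_cases h : x0 i = 0
    · have hiJ : i ∈ J := by simp [hJ, h]
      have h1 := hεbound i hiJ
      have h2 : s * (Aᵀ *ᵥ mu) i ≤ ε * |(Aᵀ *ᵥ mu) i| := by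
        calc s * (Aᵀ *ᵥ mu) i ≤ |s * (Aᵀ *ᵥ mu) i| := le_abs_self _
          _ = |s| * |(Aᵀ *ᵥ mu) i| := abs_mul _ _
          _ ≤ ε * |(Aᵀ *ᵥ mu) i| := mul_le_mul_of_nonneg_right hs (abs_nonneg _)
      nlinarith [abs_nonneg ((Aᵀ *ᵥ mu) i), hεpos]
    · rw [hmuker i h, mul_zero, add_zero]
      exact hlbarfeas i
  have hval2 : ∀ (s : ℝ), b ⬝ᵥ (lbar + s • mu) = vstar := by
    intro s
    rw [dotProduct_add, dotProduct_smul, hbmu, smul_zero, add_zero, hlbarval]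
  have hdualopt : ∀ (s : ℝ), |s| ≤ ε → (lbar + s • mu) ∈ dualOptSet A b c := by
    intro s hs
    refine ⟨hfeas2 s hs, fun nu hnu => ?_⟩
    rw [hval2 s]
    exact weak_duality A b c x0 hfeas hpos nu hnu
  refine ⟨lbar + ε • mu, lbar + (-ε) • mu, hdualopt ε (le_of_eq (abs_of_pos hεpos)),
    hdualopt (-ε) (by rw [abs_neg]; exact le_of_eq (abs_of_pos hεpos)), ?_⟩
  intro hcon
  apply hmune
  have h1 : ε • mu = (-ε) • mu := add_left_cancel hcon
  rw [neg_smul] at h1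
  have h2 : (2 * ε) • mu = 0 := by
    rw [two_mul, add_smul, add_eq_zero_iff_eq_neg]
    exact h1
  rcases smul_eq_zero.mp h2 with h | h
  · exfalso; nlinarith
  · exact h


end
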